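/- Let J ≥ 2. The adjacent ratio map, sending a probability vector (π₁,…,π_J) with all π_j > 0 and Σ π_j = 1 to (r₁,…,r_{J−1}) where r_j = π_j/(π_j + π_{j+1}), is a bijection onto the open cube (0,1)^{J−1}. -/

import Mathlib

/-- The adjacent ratio map `π ↦ (π_j/(π_j+π_{j+1}))_{j=1,…,J−1}` is a bijection from the
positive probability vectors on `{1,…,J}` onto the open cube `(0,1)^{J−1}`: it maps into
the cube, is injective, and is surjective onto the cube. -/
theorem adjacent_ratio_bijection (J : ℕ) (hJ : 2 ≤ J) :
    -- maps into the open cube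
    (∀ π : ℕ → ℝ, (∀ j ∈ Finset.Icc 1 J, 0 < π j) → (∑ j ∈ Finset.Icc 1 J, π j = 1) →
      ∀ j ∈ Finset.Icc 1 (J - 1),
        0 < π j / (π j + π (j + 1)) ∧ π j / (π j + π (j + 1)) < 1) ∧
    -- injective on positive probability vectors
    (∀ π π' : ℕ → ℝ,
      (∀ j ∈ Finset.Icc 1 J, 0 < π j) → (∑ j ∈ Finset.Icc 1 J, π j = 1) →
      (∀ j ∈ Finset.Icc 1 J, 0 < π' j) → (∑ j ∈ Finset.Icc 1 J, π' j = 1) →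
      (∀ j ∈ Finset.Icc 1 (J - 1),
        π j / (π j + π (j + 1)) = π' j / (π' j + π' (j + 1))) →
      ∀ j ∈ Finset.Icc 1 J, π j = π' j) ∧
    -- surjective onto the open cube
    (∀ u : ℕ → ℝ, (∀ j ∈ Finset.Icc 1 (J - 1), 0 < u j ∧ u j < 1) →
      ∃ π : ℕ → ℝ, (∀ j ∈ Finset.Icc 1 J, 0 < π j) ∧ (∑ j ∈ Finset.Icc 1 J, π j = 1) ∧
        ∀ j ∈ Finset.Icc 1 (J - 1), π j / (π j + π (j + 1)) = u j) := by
  refine ⟨?_, ?_, ?_⟩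
  · -- into the cube
    intro π hpos hsum j hj
    simp only [Finset.mem_Icc] at hj
    have h1 : 0 < π j := hpos j (by simp [Finset.mem_Icc]; omega)
    have h2 : 0 < π (j + 1) := hpos (j + 1) (by simp [Finset.mem_Icc]; omega)
    constructor
    · positivity
    · rw [div_lt_one (by linarith)]; linarith
  · -- injectivity
    intro π π' hpos hsum hpos' hsum' hr j hj
    set c : ℝ := π' 1 / π 1 with hc
    have key : ∀ k, 1 ≤ k → k ≤ J → π' k = c * π k := by
      intro k
      induction k with
      | zero => omega
      | succ n ih =>
        intro _ hkJ
        rcases Nat.eq_zero_or_pos n with h0 | h1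
        · subst h0
          have hp1 : 0 < π 1 := hpos 1 (by simp [Finset.mem_Icc]; omega)
          simp only [zero_add, hc]
          rw [div_mul_cancel₀ _ hp1.ne']
        · have hnJ1 : n ∈ Finset.Icc 1 (J - 1) := by simp [Finset.mem_Icc]; omega
          have hn := ih h1 (by omega)
          have ha : 0 < π n := hpos n (by simp [Finset.mem_Icc]; omega)
          have hb : 0 < π (n + 1) := hpos (n + 1) (by simp [Finset.mem_Icc]; omega)
          have ha' : 0 < π' n := hpos' n (by simp [Finset.mem_Icc]; omega)
          have hb' : 0 < π' (n + 1) := hpos' (n + 1) (by simp [Finset.mem_Icc]; omega)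
          have hr' := hr n hnJ1
          have hcross : π n * π' (n + 1) = π' n * π (n + 1) := by
            have hd1 : π n + π (n + 1) ≠ 0 := by linarith
            have hd2 : π' n + π' (n + 1) ≠ 0 := by linarith
            field_simp at hr'
            linear_combination hr'
          have hπn : π n ≠ 0 := ne_of_gt ha
          have : π' (n + 1) = π' n * π (n + 1) / π n := by
            field_simp
            linear_combination hcross
          rw [this, hn]
          field_simp
    have hcsum : ∑ j ∈ Finset.Icc 1 J, π' j = c * ∑ j ∈ Finset.Icc 1 J, π j := by
      rw [Finset.mul_sum]
      apply Finset.sum_congr rfl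
      intro k hk
      simp only [Finset.mem_Icc] at hk
      exact key k hk.1 hk.2
    rw [hsum, hsum', mul_one] at hcsum
    simp only [Finset.mem_Icc] at hj
    rw [key j hj.1 hj.2, ← hcsum, one_mul]
  · -- surjectivity
    intro u hu
    set ρ : ℕ → ℝ := fun i => if i ∈ Finset.Icc 1 (J - 1) then (1 - u i) / u i else 1
      with hρ
    have hρpos : ∀ i, 0 < ρ i := by
      intro i
      rw [hρ]
      by_cases h : i ∈ Finset.Icc 1 (J - 1)
      · simp only [h, if_true]
        obtain ⟨h1, h2⟩ := hu i h
        apply div_pos <;> linarith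
      · simp [h]
    set f : ℕ → ℝ := fun k => ∏ i ∈ Finset.Icc 1 (k - 1), ρ i with hf
    have hfpos : ∀ k, 0 < f k := by
      intro k
      exact Finset.prod_pos fun i _ => hρpos i
    have hfstep : ∀ k, 1 ≤ k → f (k + 1) = f k * ρ k := by
      intro k hk
      have hk1 : k - 1 + 1 = k := by omega
      show (∏ i ∈ Finset.Icc 1 (k + 1 - 1), ρ i) = (∏ i ∈ Finset.Icc 1 (k - 1), ρ i) * ρ k
      rw [Nat.add_sub_cancel, ← hk1, Finset.prod_Icc_succ_top (by omega), hk1]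
    set S : ℝ := ∑ j ∈ Finset.Icc 1 J, f j with hS
    have hSpos : 0 < S := by
      apply Finset.sum_pos (fun i _ => hfpos i)
      exact ⟨1, by simp [Finset.mem_Icc]; omega⟩
    refine ⟨fun k => f k / S, ?_, ?_, ?_⟩
    · intro j _
      exact div_pos (hfpos j) hSpos
    · rw [← Finset.sum_div, ← hS, div_self (ne_of_gt hSpos)]
    · intro j hj
      have hjm := hj
      simp only [Finset.mem_Icc] at hjm
      have hustep : ρ j = (1 - u j) / u j := by rw [hρ]; simp [hj]
      obtain ⟨hu1, hu2⟩ := hu j hj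
      have hfj := hfpos j
      have hfj1 := hfpos (j + 1)
      have hstep := hfstep j hjm.1
      have hSne : S ≠ 0 := ne_of_gt hSpos
      have hfne : f j ≠ 0 := ne_of_gt hfj
      have hune : u j ≠ 0 := ne_of_gt hu1
      show f j / S / (f j / S + f (j + 1) / S) = u j
      rw [hstep, hustep]
      have hden : f j / S + f j * ((1 - u j) / u j) / S ≠ 0 := by
        have h1 : 0 < f j * ((1 - u j) / u j) / S :=
          div_pos (mul_pos hfj (div_pos (by linarith) hu1)) hSpos
        have h2 : 0 < f j / S := div_pos hfj hSpos
        linarith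
      rw [div_eq_iff hden]
      field_simp
      ring
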